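/- For every integer M ≥ 1, in the Baumslag–Solitar group BS(1,M) one has limsup_{n→∞} (g_n)^{1/n} = 4, where the n-th roots are real n-th roots; equivalently, the power series G(z;1) = Σ_{n≥0} g_n z^n has radius of convergence exactly 1/4. -/

import Mathlib

noncomputable section

open LaurentPolynomial PowerSeries

/-- The single relator `a^N b a^{-M} b^{-1}` of the Baumslag–Solitar group. -/
def bsRels (N M : ℕ) : Set (FreeGroup (Fin 2)) :=
  {FreeGroup.of 0 ^ N * FreeGroup.of 1 * (FreeGroup.of 0 ^ M)⁻¹ * (FreeGroup.of 1)⁻¹}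

/-- The Baumslag–Solitar group `BS(N,M)`. -/
abbrev BSGroup (N M : ℕ) := PresentedGroup (bsRels N M)

/-- The image of the generator `a` in `BS(N,M)`. -/
def bsA (N M : ℕ) : BSGroup N M := PresentedGroup.of 0

/-- The image of the generator `b` in `BS(N,M)`. -/
def bsB (N M : ℕ) : BSGroup N M := PresentedGroup.of 1

/-- The alphabet `{a, a⁻¹, b, b⁻¹}`: a generator index together with a sign. -/
abbrev BSLetter : Type := Fin 2 × Bool

/-- The evaluation of a letter in `BS(N,M)`. -/
def letterVal (N M : ℕ) (p : BSLetter) : BSGroup N M :=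
  if p.2 then PresentedGroup.of p.1 else (PresentedGroup.of p.1)⁻¹

/-- The evaluation in `BS(N,M)` of the prefix of length `m` of a word. -/
def prefixVal (N M : ℕ) {n : ℕ} (w : Fin n → BSLetter) (m : ℕ) : BSGroup N M :=
  (((List.ofFn w).take m).map (letterVal N M)).prod

/-- The evaluation of a word of length `n` in `BS(N,M)`. -/
def wordVal (N M : ℕ) {n : ℕ} (w : Fin n → BSLetter) : BSGroup N M :=
  ((List.ofFn w).map (letterVal N M)).prod

/-- `g_{n,k}`: the number of words of length `n` evaluating to `a^k` in `BS(N,M)`. -/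
def gCount (N M n : ℕ) (k : ℤ) : ℕ :=
  Nat.card {w : Fin n → BSLetter // wordVal N M w = bsA N M ^ k}

/-- `g_n`: the number of words of length `n` whose evaluation lies in `⟨a⟩`. -/
def gTot (N M n : ℕ) : ℕ :=
  Nat.card {w : Fin n → BSLetter // ∃ k : ℤ, wordVal N M w = bsA N M ^ k}

/-- Membership in `𝓛`: the evaluation lies in `⟨a⟩` and no proper prefix evaluates
into the coset `b⁻¹⟨a⟩`. -/
def memL (N M : ℕ) {n : ℕ} (w : Fin n → BSLetter) : Prop :=
  (∃ k : ℤ, wordVal N M w = bsA N M ^ k) ∧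
    ∀ m < n, ¬ ∃ j : ℤ, prefixVal N M w m = (bsB N M)⁻¹ * bsA N M ^ j

/-- Membership in `𝓚`: the evaluation lies in `⟨a⟩` and no proper prefix evaluates
into the coset `b⟨a⟩`. -/
def memK (N M : ℕ) {n : ℕ} (w : Fin n → BSLetter) : Prop :=
  (∃ k : ℤ, wordVal N M w = bsA N M ^ k) ∧
    ∀ m < n, ¬ ∃ j : ℤ, prefixVal N M w m = bsB N M * bsA N M ^ j

/-- `ℓ_{n,k}`: the number of words in `𝓛` of length `n` evaluating to `a^k`. -/
def lCount (N M n : ℕ) (k : ℤ) : ℕ :=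
  Nat.card {w : Fin n → BSLetter // memL N M w ∧ wordVal N M w = bsA N M ^ k}

/-- `κ_{n,k}`: the number of words in `𝓚` of length `n` evaluating to `a^k`. -/
def kCount (N M n : ℕ) (k : ℤ) : ℕ :=
  Nat.card {w : Fin n → BSLetter // memK N M w ∧ wordVal N M w = bsA N M ^ k}

/-- The number of words of length `n` in `𝓛`. -/
def lTot (N M n : ℕ) : ℕ := Nat.card {w : Fin n → BSLetter // memL N M w}

/-- The number of words of length `n` in `𝓚`. -/
def kTot (N M n : ℕ) : ℕ := Nat.card {w : Fin n → BSLetter // memK N M w}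

/-- Package counting data `f n k` into the Laurent polynomial `Σ_k f n k · q^k`
(the counts vanish for `|k| > n`). -/
def coeffPoly (f : ℕ → ℤ → ℕ) (n : ℕ) : LaurentPolynomial ℚ :=
  ∑ k ∈ Finset.Icc (-(n : ℤ)) (n : ℤ), LaurentPolynomial.C (f n k : ℚ) * T k

/-- The generating function `G(z;q)`. -/
def Gser (N M : ℕ) : PowerSeries (LaurentPolynomial ℚ) := PowerSeries.mk (coeffPoly (gCount N M))

/-- The generating function `L(z;q)`. -/
def Lser (N M : ℕ) : PowerSeries (LaurentPolynomial ℚ) := PowerSeries.mk (coeffPoly (lCount N M))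

/-- The generating function `K(z;q)`. -/
def Kser (N M : ℕ) : PowerSeries (LaurentPolynomial ℚ) := PowerSeries.mk (coeffPoly (kCount N M))

/-- The `ℚ`-linear operator `Φ_{d,e}` on `ℚ[q,q⁻¹]`: maps `q^{dj} ↦ q^{ej}` and kills
`q^k` when `d ∤ k`. -/
def Phi (d e : ℕ) (p : LaurentPolynomial ℚ) : LaurentPolynomial ℚ :=
  Finsupp.sum (AddMonoidAlgebra.coeff p) fun k c => if (d : ℤ) ∣ k then LaurentPolynomial.C c * T ((e : ℤ) * (k / d)) else 0

/-- `Φ_{d,e}` applied coefficientwise to power series. -/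
def PhiSer (d e : ℕ) (f : PowerSeries (LaurentPolynomial ℚ)) : PowerSeries (LaurentPolynomial ℚ) :=
  PowerSeries.mk fun n => Phi d e (PowerSeries.coeff n f)

/-- The Laurent polynomial `Q = q + q⁻¹`. -/
def Qpoly : LaurentPolynomial ℚ := T 1 + T (-1)

end

namespace BSAux

open List

/-! ### Group-theoretic lemmas in `BS(1,M)` -/

lemma bs_rel (M : ℕ) : bsA 1 M * bsB 1 M = bsB 1 M * bsA 1 M ^ M := by
  have hr : (FreeGroup.of 0 ^ 1 * FreeGroup.of 1 * (FreeGroup.of 0 ^ M)⁻¹ *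
      (FreeGroup.of 1)⁻¹ : FreeGroup (Fin 2)) ∈ bsRels 1 M := rfl
  have h1 : PresentedGroup.mk (bsRels 1 M)
      (FreeGroup.of 0 ^ 1 * FreeGroup.of 1 * (FreeGroup.of 0 ^ M)⁻¹ * (FreeGroup.of 1)⁻¹) = 1 :=
    (QuotientGroup.eq_one_iff _).mpr (Subgroup.subset_normalClosure hr)
  simp only [map_mul, map_inv, map_pow, pow_one] at h1
  rw [mul_inv_eq_one, mul_inv_eq_iff_eq_mul] at h1
  exact h1

lemma conj_one (M : ℕ) : (bsB 1 M)⁻¹ * bsA 1 M * bsB 1 M = bsA 1 M ^ M := by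
  rw [mul_assoc, bs_rel, inv_mul_cancel_left]

lemma conj_zpow' (M : ℕ) (x : ℤ) :
    (bsB 1 M)⁻¹ * bsA 1 M ^ x * bsB 1 M = bsA 1 M ^ (x * (M : ℤ)) := by
  have h : ((bsB 1 M)⁻¹ * bsA 1 M * ((bsB 1 M)⁻¹)⁻¹) ^ x =
      (bsB 1 M)⁻¹ * bsA 1 M ^ x * ((bsB 1 M)⁻¹)⁻¹ := conj_zpow
  rw [inv_inv] at h
  rw [← h, conj_one, ← zpow_natCast (bsA 1 M) M, ← zpow_mul, mul_comm]

lemma conj_pow (M : ℕ) (h : ℕ) (x : ℤ) :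
    ((bsB 1 M)⁻¹) ^ h * bsA 1 M ^ x * bsB 1 M ^ h = bsA 1 M ^ (x * (M : ℤ) ^ h) := by
  induction h generalizing x with
  | zero => simp
  | succ n ih =>
    have : ((bsB 1 M)⁻¹) ^ (n + 1) * bsA 1 M ^ x * bsB 1 M ^ (n + 1) =
        ((bsB 1 M)⁻¹) ^ n * ((bsB 1 M)⁻¹ * bsA 1 M ^ x * bsB 1 M) * bsB 1 M ^ n := by
      rw [pow_succ, pow_succ']; group
    rw [this, conj_zpow', ih]
    congr 1
    ring

/-- the `b`-weight of a letter -/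
def bval (p : BSLetter) : ℤ := if p.1 = 1 then (if p.2 then 1 else -1) else 0

/-- the `b`-exponent sum of a word -/
def bsum (l : List BSLetter) : ℤ := (l.map bval).sum

@[simp] lemma bsum_nil : bsum [] = 0 := rfl

lemma bsum_append (l l' : List BSLetter) : bsum (l ++ l') = bsum l + bsum l' := by
  simp [bsum]

lemma zpow_of_nonpos {G : Type*} [Group G] (g : G) {s : ℤ} (hs : s ≤ 0) :
    g ^ s = (g⁻¹) ^ (-s).toNat := by
  rw [← zpow_natCast, Int.toNat_of_nonneg (by omega), inv_zpow, ← zpow_neg, neg_neg]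

lemma Bs_mul_A (M : ℕ) {s : ℤ} (hs : s ≤ 0) (e : ℤ) :
    bsB 1 M ^ s * bsA 1 M ^ e = bsA 1 M ^ (e * (M : ℤ) ^ (-s).toNat) * bsB 1 M ^ s := by
  have hB : bsB 1 M ^ s = ((bsB 1 M)⁻¹) ^ (-s).toNat := zpow_of_nonpos _ hs
  have hB' : (bsB 1 M ^ s)⁻¹ = bsB 1 M ^ ((-s).toNat : ℕ) := by
    rw [hB, inv_pow, inv_inv]
  have key := conj_pow M (-s).toNat e
  rw [← hB, ← hB'] at key
  calc bsB 1 M ^ s * bsA 1 M ^ e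
      = (bsB 1 M ^ s * bsA 1 M ^ e * (bsB 1 M ^ s)⁻¹) * bsB 1 M ^ s := by group
    _ = bsA 1 M ^ (e * (M : ℤ) ^ (-s).toNat) * bsB 1 M ^ s := by rw [key]

lemma prod_eq (M : ℕ) (l : List BSLetter) (hpre : ∀ m, bsum (l.take m) ≤ 0) :
    ∃ x : ℤ, (l.map (letterVal 1 M)).prod = bsA 1 M ^ x * bsB 1 M ^ (bsum l) := by
  induction l using List.reverseRecOn with
  | nil => exact ⟨0, by simp⟩
  | append_singleton l' c ih =>
    have hpre' : ∀ m, bsum (l'.take m) ≤ 0 := by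
      intro m
      rcases le_or_gt m l'.length with h | h
      · have h1 : l'.take m = (l' ++ [c]).take m := (List.take_append_of_le_length h).symm
        rw [h1]; exact hpre _
      · have h1 : l'.take m = (l' ++ [c]).take l'.length := by
          rw [List.take_append_of_le_length le_rfl, List.take_length,
            List.take_of_length_le (le_of_lt h)]
        rw [h1]; exact hpre _
    obtain ⟨x', hx'⟩ := ih hpre'
    have hs' : bsum l' ≤ 0 := by
      have := hpre' l'.length
      rwa [List.take_length] at this
    have hprod : ((l' ++ [c]).map (letterVal 1 M)).prod =
        bsA 1 M ^ x' * (bsB 1 M ^ (bsum l') * letterVal 1 M c) := by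
      rw [List.map_append, List.prod_append, hx']
      simp [mul_assoc]
    rw [bsum_append]
    have hc : c = ((0 : Fin 2), true) ∨ c = ((0 : Fin 2), false) ∨ c = ((1 : Fin 2), true) ∨
        c = ((1 : Fin 2), false) := by
      rcases c with ⟨i, b⟩; fin_cases i <;> cases b <;> simp
    rcases hc with rfl | rfl | rfl | rfl
    · -- a
      refine ⟨x' + 1 * (M : ℤ) ^ (-(bsum l')).toNat, ?_⟩
      have hA : letterVal 1 M ((0 : Fin 2), true) = bsA 1 M ^ (1 : ℤ) := by
        simp [letterVal, bsA]
      rw [hprod, hA, Bs_mul_A M hs', zpow_add]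
      simp [bval, bsum, mul_assoc]
    · -- a⁻¹
      refine ⟨x' + (-1) * (M : ℤ) ^ (-(bsum l')).toNat, ?_⟩
      have hA : letterVal 1 M ((0 : Fin 2), false) = bsA 1 M ^ (-1 : ℤ) := by
        simp [letterVal, bsA, zpow_neg]
      rw [hprod, hA, Bs_mul_A M hs', zpow_add]
      simp [bval, bsum, mul_assoc]
    · -- b
      refine ⟨x', ?_⟩
      have hB : letterVal 1 M ((1 : Fin 2), true) = bsB 1 M := by
        simp [letterVal, bsB]
      rw [hprod, hB]
      have : bsum [((1 : Fin 2), true)] = 1 := by simp [bsum, bval]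
      rw [this, ← zpow_add_one]

    · -- b⁻¹
      refine ⟨x', ?_⟩
      have hB : letterVal 1 M ((1 : Fin 2), false) = (bsB 1 M)⁻¹ := by
        simp [letterVal, bsB]
      rw [hprod, hB]
      have : bsum [((1 : Fin 2), false)] = -1 := by simp [bsum, bval]
      rw [this, ← zpow_sub_one, sub_eq_add_neg]
lemma word_in_a (M : ℕ) {n : ℕ} (w : Fin n → BSLetter)
    (hpre : ∀ m, bsum ((List.ofFn w).take m) ≤ 0) (htot : bsum (List.ofFn w) = 0) :
    ∃ k : ℤ, wordVal 1 M w = bsA 1 M ^ k := by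
  obtain ⟨x, hx⟩ := prod_eq M (List.ofFn w) hpre
  exact ⟨x, by rw [wordVal, hx, htot]; simp⟩


/-! ### Interleaving construction -/

/-- weight of a `b`-sign -/
def dval (b : Bool) : ℤ := if b then 1 else -1

/-- signed sum of a list of `b`-signs -/
def dsum (l : List Bool) : ℤ := (l.map dval).sum

@[simp] lemma dsum_nil : dsum [] = 0 := rfl

lemma bsum_cons (c : BSLetter) (l : List BSLetter) : bsum (c :: l) = bval c + bsum l := by
  simp [bsum]

lemma dsum_cons (d : Bool) (l : List Bool) : dsum (d :: l) = dval d + dsum l := by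
  simp [dsum]

lemma fin01 : ((0 : Fin 2) = 1) = False := by simp [Fin.ext_iff]

lemma fin10 : ((1 : Fin 2) = 0) = False := by simp [Fin.ext_iff]

/-- Interleave a pattern `q` (`true` = `b`-letter), `b`-signs `ds` and `a`-signs `us`
into a word. -/
def merge : List Bool → List Bool → List Bool → List BSLetter
  | [], _, _ => []
  | true :: q, d :: ds, us => ((1 : Fin 2), d) :: merge q ds us
  | true :: q, [], us => ((1 : Fin 2), true) :: merge q [] us
  | false :: q, ds, u :: us => ((0 : Fin 2), u) :: merge q ds us
  | false :: q, ds, [] => ((0 : Fin 2), true) :: merge q ds []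

lemma merge_length (q ds us : List Bool) : (merge q ds us).length = q.length := by
  induction q, ds, us using merge.induct <;> simp [merge, *]

lemma merge_pattern (q ds us : List Bool) :
    (merge q ds us).map (fun p => decide (p.1 = 1)) = q := by
  induction q, ds, us using merge.induct <;> simp [merge, *]

lemma merge_bsigns (q ds us : List Bool) (h : q.count true = ds.length) :
    (merge q ds us).filterMap (fun p => if p.1 = 1 then some p.2 else none) = ds := by
  induction q, ds, us using merge.induct with
  | case1 ds us =>
    obtain rfl : ds = [] := List.length_eq_zero_iff.mp (by simpa using h.symm)
    simp [merge]
  | case2 q d ds us ih =>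
    have h' : q.count true = ds.length := by simp [List.count_cons] at h; omega
    simp [merge, ih h']
  | case3 q us ih => simp [List.count_cons] at h
  | case4 q ds u us ih =>
    have h' : q.count true = ds.length := by simpa [List.count_cons] using h
    simp [merge, fin01, ih h']
  | case5 q ds ih =>
    have h' : q.count true = ds.length := by simpa [List.count_cons] using h
    simp [merge, fin01, ih h']

lemma merge_asigns (q ds us : List Bool) (h : q.count false = us.length) :
    (merge q ds us).filterMap (fun p => if p.1 = 0 then some p.2 else none) = us := by
  induction q, ds, us using merge.induct with
  | case1 ds us =>
    obtain rfl : us = [] := List.length_eq_zero_iff.mp (by simpa using h.symm)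
    simp [merge]
  | case2 q d ds us ih =>
    have h' : q.count false = us.length := by simpa [List.count_cons] using h
    simp [merge, fin10, ih h']
  | case3 q us ih =>
    have h' : q.count false = us.length := by simpa [List.count_cons] using h
    simp [merge, fin10, ih h']
  | case4 q ds u us ih =>
    have h' : q.count false = us.length := by simp [List.count_cons] at h; omega
    simp [merge, ih h']
  | case5 q ds ih => simp [List.count_cons] at h

lemma bval_b (d : Bool) : bval ((1 : Fin 2), d) = dval d := rfl

lemma bval_a (u : Bool) : bval ((0 : Fin 2), u) = 0 := rfl

lemma merge_bsum (q ds us : List Bool) (h : q.count true = ds.length) :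
    bsum (merge q ds us) = dsum ds := by
  induction q, ds, us using merge.induct with
  | case1 ds us =>
    obtain rfl : ds = [] := List.length_eq_zero_iff.mp (by simpa using h.symm)
    simp [merge]
  | case2 q d ds us ih =>
    have h' : q.count true = ds.length := by simp [List.count_cons] at h; omega
    simp only [merge, bsum_cons, dsum_cons, bval_b, ih h']
  | case3 q us ih => simp [List.count_cons] at h
  | case4 q ds u us ih =>
    have h' : q.count true = ds.length := by simpa [List.count_cons] using h
    simp only [merge, bsum_cons, bval_a, ih h', zero_add]
  | case5 q ds ih =>
    have h' : q.count true = ds.length := by simpa [List.count_cons] using h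
    simp only [merge, bsum_cons, bval_a, ih h', zero_add]

lemma merge_bsum_take (q ds us : List Bool) (h : q.count true = ds.length) (m : ℕ) :
    ∃ j, bsum ((merge q ds us).take m) = dsum (ds.take j) := by
  induction q, ds, us using merge.induct generalizing m with
  | case1 ds us => exact ⟨0, by simp [merge, bsum]⟩
  | case2 q d ds us ih =>
    have h' : q.count true = ds.length := by simp [List.count_cons] at h; omega
    cases m with
    | zero => exact ⟨0, by simp [bsum]⟩
    | succ m =>
      obtain ⟨j, hj⟩ := ih h' m
      exact ⟨j + 1, by simp only [merge, List.take_succ_cons, bsum_cons, dsum_cons, bval_b, hj]⟩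
  | case3 q us ih => simp [List.count_cons] at h
  | case4 q ds u us ih =>
    have h' : q.count true = ds.length := by simpa [List.count_cons] using h
    cases m with
    | zero => exact ⟨0, by simp [bsum]⟩
    | succ m =>
      obtain ⟨j, hj⟩ := ih h' m
      exact ⟨j, by simp only [merge, List.take_succ_cons, bsum_cons, bval_a, hj, zero_add]⟩
  | case5 q ds ih =>
    have h' : q.count true = ds.length := by simpa [List.count_cons] using h
    cases m with
    | zero => exact ⟨0, by simp [bsum]⟩
    | succ m =>
      obtain ⟨j, hj⟩ := ih h' m
      exact ⟨j, by simp only [merge, List.take_succ_cons, bsum_cons, bval_a, hj, zero_add]⟩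

/-- `true` for a `D` (down) step; we use `D = +1`, `U = -1` so that Dyck words give
nonpositive paths. -/
def stepB : DyckStep → Bool
  | DyckStep.U => false
  | DyckStep.D => true

lemma stepB_injective : Function.Injective stepB := by
  intro s t h; cases s <;> cases t <;> simp [stepB] at h ⊢

lemma dsum_map_stepB (l : List DyckStep) :
    dsum (l.map stepB) = (l.count DyckStep.D : ℤ) - l.count DyckStep.U := by
  induction l with
  | nil => simp
  | cons s l ih =>
    cases s <;> simp [dsum_cons, stepB, dval, List.count_cons, ih] <;> omega


/-! ### Counting -/

/-- recover a tuple from a list -/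
def toWord {α : Type*} {n : ℕ} (l : List α) (h : l.length = n) : Fin n → α :=
  fun i => l.get ⟨i.1, by omega⟩

lemma ofFn_toWord {α : Type*} {n : ℕ} (l : List α) (h : l.length = n) :
    List.ofFn (toWord l h) = l := by
  subst h
  exact List.ofFn_get l

lemma count_ofFn_sum {n : ℕ} (f : Fin n → Bool) :
    (List.ofFn f).count true = ∑ i : Fin n, if f i = true then 1 else 0 := by
  induction n with
  | zero => simp
  | succ n ih =>
    rw [List.ofFn_succ, List.count_cons, ih, Fin.sum_univ_succ]
    cases h0 : f 0 <;> simp [h0] <;> omega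

lemma count_ofFn_card {n : ℕ} (f : Fin n → Bool) :
    (List.ofFn f).count true = (Finset.univ.filter fun i => f i = true).card := by
  rw [count_ofFn_sum, Finset.card_filter]

lemma count_bool (l : List Bool) : l.count true + l.count false = l.length := by
  induction l with
  | nil => simp
  | cons b l ih => cases b <;> simp [List.count_cons] <;> omega

/-- the domain of the encoding -/
def Domain (t : ℕ) : Type :=
  {f : Fin (4 * t) → Bool // (List.ofFn f).count true = 2 * t} ×
    {p : DyckWord // p.semilength = t} × (Fin (2 * t) → Bool)

/-- the encoded word, as a list -/
def encList (t : ℕ) (x : Domain t) : List BSLetter :=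
  merge (List.ofFn x.1.1) (x.2.1.1.toList.map stepB) (List.ofFn x.2.2)

lemma encList_length (t : ℕ) (x : Domain t) : (encList t x).length = 4 * t := by
  rw [encList, merge_length, List.length_ofFn]

lemma enc_count_true (t : ℕ) (x : Domain t) :
    (List.ofFn x.1.1).count true = (x.2.1.1.toList.map stepB).length := by
  rw [List.length_map, ← x.2.1.1.two_mul_semilength_eq_length, x.2.1.2, x.1.2]

lemma enc_count_false (t : ℕ) (x : Domain t) :
    (List.ofFn x.1.1).count false = (List.ofFn x.2.2).length := by
  have h1 := count_bool (List.ofFn x.1.1)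
  rw [List.length_ofFn] at h1 ⊢
  have := x.1.2
  omega

lemma dyck_dsum_take (p : DyckWord) (j : ℕ) : dsum ((p.toList.map stepB).take j) ≤ 0 := by
  rw [← List.map_take, dsum_map_stepB]
  have := p.count_D_le_count_U j
  omega

lemma dyck_dsum (p : DyckWord) : dsum (p.toList.map stepB) = 0 := by
  rw [dsum_map_stepB]
  have := p.count_U_eq_count_D
  omega

/-- the encoding map -/
def enc (M t : ℕ) (x : Domain t) :
    {w : Fin (4 * t) → BSLetter // ∃ k : ℤ, wordVal 1 M w = bsA 1 M ^ k} := by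
  refine ⟨toWord (encList t x) (encList_length t x), ?_⟩
  apply word_in_a M
  · intro m
    rw [ofFn_toWord, encList]
    obtain ⟨j, hj⟩ := merge_bsum_take (List.ofFn x.1.1) (x.2.1.1.toList.map stepB)
      (List.ofFn x.2.2) (enc_count_true t x) m
    rw [hj]
    exact dyck_dsum_take _ _
  · rw [ofFn_toWord, encList, merge_bsum _ _ _ (enc_count_true t x)]
    exact dyck_dsum _

lemma enc_injective (M t : ℕ) : Function.Injective (enc M t) := by
  intro x y hxy
  have hl : encList t x = encList t y := by
    have h1 := congrArg (fun z => List.ofFn z.1) hxy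
    simpa only [enc, ofFn_toWord] using h1
  rw [encList, encList] at hl
  have hq : List.ofFn x.1.1 = List.ofFn y.1.1 := by
    rw [← merge_pattern (List.ofFn x.1.1) (x.2.1.1.toList.map stepB) (List.ofFn x.2.2),
      ← merge_pattern (List.ofFn y.1.1) (y.2.1.1.toList.map stepB) (List.ofFn y.2.2), hl]
  have hf : x.1 = y.1 := Subtype.ext (List.ofFn_inj.mp hq)
  have hd : x.2.1 = y.2.1 := by
    have h2 : x.2.1.1.toList.map stepB = y.2.1.1.toList.map stepB := by
      rw [← merge_bsigns (List.ofFn x.1.1) (x.2.1.1.toList.map stepB) (List.ofFn x.2.2)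
          (enc_count_true t x),
        ← merge_bsigns (List.ofFn y.1.1) (y.2.1.1.toList.map stepB) (List.ofFn y.2.2)
          (enc_count_true t y), hl]
    have h3 : x.2.1.1.toList = y.2.1.1.toList :=
      (List.map_injective_iff.mpr stepB_injective) h2
    exact Subtype.ext (DyckWord.ext h3)
  have hu : x.2.2 = y.2.2 := by
    have h2 : List.ofFn x.2.2 = List.ofFn y.2.2 := by
      rw [← merge_asigns (List.ofFn x.1.1) (x.2.1.1.toList.map stepB) (List.ofFn x.2.2)
          (enc_count_false t x),
        ← merge_asigns (List.ofFn y.1.1) (y.2.1.1.toList.map stepB) (List.ofFn y.2.2)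
          (enc_count_false t y), hl]
    exact List.ofFn_inj.mp h2
  exact Prod.ext hf (Prod.ext hd hu)

/-- counting Boolean tuples with a prescribed number of `true`s -/
def qEquiv (n k : ℕ) :
    {f : Fin n → Bool // (List.ofFn f).count true = k} ≃ {s : Finset (Fin n) // s.card = k} where
  toFun f := ⟨Finset.univ.filter fun i => f.1 i = true, by rw [← count_ofFn_card f.1]; exact f.2⟩
  invFun s := ⟨fun i => decide (i ∈ s.1), by
    rw [count_ofFn_card]
    simpa using s.2⟩
  left_inv f := by
    apply Subtype.ext
    funext i
    simp
  right_inv s := by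
    apply Subtype.ext
    simp

lemma card_domain (t : ℕ) :
    Nat.card (Domain t) = Nat.centralBinom (2 * t) * (catalan t * 2 ^ (2 * t)) := by
  rw [Domain, Nat.card_prod, Nat.card_prod]
  congr 1
  · rw [Nat.card_congr (qEquiv (4 * t) (2 * t)), Nat.card_eq_fintype_card,
      Fintype.card_finset_len, Fintype.card_fin, Nat.centralBinom]
    congr 1
    ring
  · congr 1
    · rw [Nat.card_eq_fintype_card, DyckWord.card_dyckWord_semilength_eq_catalan]
    · rw [Nat.card_eq_fintype_card, Fintype.card_fun, Fintype.card_bool, Fintype.card_fin]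

lemma gTot_lower (M t : ℕ) :
    Nat.centralBinom (2 * t) * (catalan t * 2 ^ (2 * t)) ≤ gTot 1 M (4 * t) := by
  rw [← card_domain, gTot]
  exact Nat.card_le_card_of_injective (enc M t) (enc_injective M t)

lemma gTot_lower' (M t : ℕ) (ht : 4 ≤ t) :
    4 ^ (4 * t) ≤ (4 * t) ^ 3 * gTot 1 M (4 * t) := by
  have h1 : 4 ^ (2 * t) ≤ 2 * t * Nat.centralBinom (2 * t) :=
    (Nat.four_pow_lt_mul_centralBinom (2 * t) (by omega)).le
  have h2 : 4 ^ t ≤ t * ((t + 1) * catalan t) := by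
    rw [succ_mul_catalan_eq_centralBinom]
    exact (Nat.four_pow_lt_mul_centralBinom t (by omega)).le
  have h3 : (4 : ℕ) ^ t = 2 ^ (2 * t) := by
    rw [pow_mul]
    norm_num
  have h4 : 4 ^ (4 * t) = 4 ^ (2 * t) * (4 ^ t * 4 ^ t) := by
    rw [← pow_add, ← pow_add]
    congr 1
    ring
  calc 4 ^ (4 * t) = 4 ^ (2 * t) * (4 ^ t * 4 ^ t) := h4
    _ ≤ (2 * t * Nat.centralBinom (2 * t)) * ((t * ((t + 1) * catalan t)) * 2 ^ (2 * t)) := by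
        rw [← h3]
        exact Nat.mul_le_mul h1 (Nat.mul_le_mul h2 le_rfl)
    _ = (2 * t * (t * (t + 1))) * (Nat.centralBinom (2 * t) * (catalan t * 2 ^ (2 * t))) := by
        ring
    _ ≤ (2 * t * (t * (t + 1))) * gTot 1 M (4 * t) :=
        Nat.mul_le_mul_left _ (gTot_lower M t)
    _ ≤ (4 * t) ^ 3 * gTot 1 M (4 * t) := by
        apply Nat.mul_le_mul_right
        have h5 : (4 * t) ^ 3 = 64 * (t * (t * t)) := by ring
        have h6 : 2 * t * (t * (t + 1)) = 2 * (t * (t * t)) + 2 * (t * t) := by ring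
        have h7 : t * t ≤ t * (t * t) := Nat.mul_le_mul_left _ (Nat.le_mul_of_pos_left _ (by omega))
        omega

lemma gTot_upper (M n : ℕ) : gTot 1 M n ≤ 4 ^ n := by
  have h1 : gTot 1 M n ≤ Nat.card (Fin n → BSLetter) :=
    Nat.card_le_card_of_injective Subtype.val Subtype.val_injective
  rw [Nat.card_eq_fintype_card, Fintype.card_fun] at h1
  simpa using h1


end BSAux

open Filter in
/-- For the (amenable) group `BS(1,M)`, the growth rate of the number `g_n` of words
of length `n` evaluating into `⟨a⟩` is exactly `4`. -/
theorem bs1M_limsup_gTot_eq_four (M : ℕ) (hM : 1 ≤ M) :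
    (Filter.atTop.limsup fun n : ℕ => (gTot 1 M n : ℝ) ^ (1 / (n : ℝ))) = 4 := by
  set f : ℕ → ℝ := fun n : ℕ => (gTot 1 M n : ℝ) ^ (1 / (n : ℝ)) with hfdef
  have hnonneg : ∀ n, 0 ≤ f n := fun n => Real.rpow_nonneg (Nat.cast_nonneg _) _
  have hub : ∀ n, f n ≤ 4 := by
    intro n
    rcases Nat.eq_zero_or_pos n with rfl | hn
    · have : f 0 = 1 := by
        simp only [hfdef, Nat.cast_zero, div_zero, Real.rpow_zero]
      rw [this]; norm_num
    · have h1 : (gTot 1 M n : ℝ) ≤ (4 : ℝ) ^ (n : ℕ) := by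
        exact_mod_cast BSAux.gTot_upper M n
      have h2 : f n ≤ ((4 : ℝ) ^ (n : ℕ)) ^ (1 / (n : ℝ)) :=
        Real.rpow_le_rpow (Nat.cast_nonneg _) h1 (by positivity)
      refine h2.trans_eq ?_
      rw [← Real.rpow_natCast 4 n, ← Real.rpow_mul (by norm_num), mul_one_div,
        div_self (by exact_mod_cast hn.ne'), Real.rpow_one]
  have hbdd : IsBoundedUnder (· ≤ ·) atTop f := ⟨4, Filter.eventually_map.mpr
    (Filter.Eventually.of_forall hub)⟩
  apply le_antisymm
  · exact Filter.limsup_le_of_le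
      (isCoboundedUnder_le_of_eventually_le atTop (x := 0)
        (Filter.Eventually.of_forall hnonneg))
      (Filter.Eventually.of_forall hub)
  · -- lower bound
    refine le_of_forall_lt_imp_le_of_dense fun c hc => ?_
    set c' : ℝ := max c 1 with hc'
    have hc'1 : (1 : ℝ) ≤ c' := le_max_right _ _
    have hc'4 : c' < 4 := max_lt hc (by norm_num)
    have hc'pos : (0 : ℝ) < c' := lt_of_lt_of_le one_pos hc'1
    refine le_trans (le_max_left c 1) ?_
    apply Filter.le_limsup_of_frequently_le ?_ hbdd
    -- ∃ᶠ n, c' ≤ f n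
    have hr : (1 : ℝ) < 4 / c' := by
      rw [lt_div_iff₀ hc'pos]; linarith
    have htend := tendsto_pow_const_div_const_pow_of_one_lt 3 hr
    have hev : ∀ᶠ k : ℕ in atTop, ((k : ℝ)) ^ 3 / ((4 / c') ^ k) < 1 :=
      htend.eventually_lt_const one_pos
    have h4t : Filter.Tendsto (fun t : ℕ => 4 * t) atTop atTop :=
      tendsto_atTop_mono (fun t : ℕ => by simpa using (by omega : t ≤ 4 * t)) tendsto_id
    have hev2 : ∀ᶠ t in atTop, c' ≤ f (4 * t) := by
      filter_upwards [h4t.eventually hev, Filter.eventually_ge_atTop 4] with t h1 h2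
      -- h1 : ((4*t : ℕ) : ℝ)^3 / (4/c')^(4*t) < 1
      have hpow : (0 : ℝ) < (4 / c') ^ (4 * t) := by positivity
      rw [div_lt_one hpow] at h1
      have hNat := BSAux.gTot_lower' M t h2
      have hcast : (4 : ℝ) ^ (4 * t) ≤ ((4 * t : ℕ) : ℝ) ^ 3 * (gTot 1 M (4 * t) : ℝ) := by
        exact_mod_cast hNat
      have hdiv : ((4 / c') ^ (4 * t) : ℝ) = 4 ^ (4 * t) / c' ^ (4 * t) := div_pow _ _ _
      rw [hdiv] at h1
      have hq : ((4 * t : ℕ) : ℝ) ^ 3 * c' ^ (4 * t) < 4 ^ (4 * t) := by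
        rw [lt_div_iff₀ (by positivity)] at h1
        linarith
      have htpos : (0 : ℝ) < ((4 * t : ℕ) : ℝ) ^ 3 := by
        have : (0 : ℕ) < 4 * t := by omega
        positivity
      have hfin : c' ^ (4 * t) ≤ (gTot 1 M (4 * t) : ℝ) := by
        nlinarith
      -- take (4t)-th roots
      have ht0 : ((4 * t : ℕ) : ℝ) ≠ 0 := by
        have : (0 : ℕ) < 4 * t := by omega
        exact_mod_cast this.ne'
      have := Real.rpow_le_rpow (by positivity) hfin
        (le_of_lt (show (0:ℝ) < 1 / ((4 * t : ℕ) : ℝ) by positivity))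
      rw [← Real.rpow_natCast c' (4 * t), ← Real.rpow_mul hc'pos.le, mul_one_div,
        div_self ht0, Real.rpow_one] at this
      exact this
    exact h4t.frequently hev2.frequently
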